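/- Let n ≥ 1, R = ℝ⟦t⟧, M = Fin (2n) → R with the standard symplectic R-bilinear form Ω_R, and let A : M → End_R(M) be R-linear with Ω_R(A(X)Y,Z) totally symmetric and A(X)∘A(Y) = 0 for all X,Y ∈ M. Define ψ_A : M → M by ψ_A(x) = x − ½·A(x)x. Then: (1) ψ_{−A} ∘ ψ_A = id_M and ψ_A ∘ ψ_{−A} = id_M; (2) the 'derivative' maps id_M − A(x) are symplectic: Ω_R(Y − A(x)Y, Z − A(x)Z) = Ω_R(Y,Z) for all x,Y,Z ∈ M; and (3) ψ_A carries ∇⁰ to ∇^A = ∇⁰ + A in the sense that for all x,X,Y ∈ M: −A(X)Y + A(X − A(x)X)(Y − A(x)Y) = 0, i.e. the second-derivative identity D²ψ_A(x)(X,Y) + A(Dψ_A(x)X)(Dψ_A(x)Y) = 0 holds with Dψ_A(x) = id − A(x) and D²ψ_A(x)(X,Y) = −A(X)Y. -/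

import Mathlib

noncomputable section

/-- The standard symplectic `R`-bilinear form on `M = Fin (2n) → R`, `R = ℝ⟦t⟧`. -/
def OmegaR (n : ℕ) (x y : Fin (2*n) → PowerSeries ℝ) : PowerSeries ℝ :=
  ∑ i : Fin n, (x ⟨i.1, by have := i.isLt; omega⟩ * y ⟨n + i.1, by have := i.isLt; omega⟩
    - x ⟨n + i.1, by have := i.isLt; omega⟩ * y ⟨i.1, by have := i.isLt; omega⟩)

/-- The formal symplectomorphism `ψ_A(x) = x − ½·A(x)x` associated to an `R`-linear
`A : M → End_R(M)`, `R = ℝ⟦t⟧`. -/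
def psiR (n : ℕ)
    (A : (Fin (2*n) → PowerSeries ℝ) →ₗ[PowerSeries ℝ]
      (Fin (2*n) → PowerSeries ℝ) →ₗ[PowerSeries ℝ] (Fin (2*n) → PowerSeries ℝ))
    (x : Fin (2*n) → PowerSeries ℝ) : Fin (2*n) → PowerSeries ℝ :=
  x - (1/2 : ℝ) • A x x

lemma OmegaR_sub_left (n : ℕ) (x y z : Fin (2*n) → PowerSeries ℝ) :
    OmegaR n (x - y) z = OmegaR n x z - OmegaR n y z := by
  unfold OmegaR
  rw [← Finset.sum_sub_distrib]
  exact Finset.sum_congr rfl fun i _ => by simp [Pi.sub_apply]; ring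

lemma OmegaR_sub_right (n : ℕ) (x y z : Fin (2*n) → PowerSeries ℝ) :
    OmegaR n x (y - z) = OmegaR n x y - OmegaR n x z := by
  unfold OmegaR
  rw [← Finset.sum_sub_distrib]
  exact Finset.sum_congr rfl fun i _ => by simp [Pi.sub_apply]; ring

lemma OmegaR_skew (n : ℕ) (x y : Fin (2*n) → PowerSeries ℝ) :
    OmegaR n x y = -OmegaR n y x := by
  unfold OmegaR
  rw [← Finset.sum_neg_distrib]
  exact Finset.sum_congr rfl fun i _ => by ring

lemma OmegaR_zero_left (n : ℕ) (y : Fin (2*n) → PowerSeries ℝ) :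
    OmegaR n 0 y = 0 := by simp [OmegaR]

lemma OmegaR_nondeg (n : ℕ) (v : Fin (2*n) → PowerSeries ℝ)
    (h : ∀ z, OmegaR n v z = 0) : v = 0 := by
  funext j
  rcases lt_or_ge j.1 n with hj | hj
  · have := h (Pi.single ⟨n + j.1, by omega⟩ 1)
    rw [OmegaR, Finset.sum_eq_single ⟨j.1, hj⟩] at this
    · have hn0 : n ≠ 0 := by omega
      simpa [Pi.single_apply, Fin.ext_iff, hn0] using this
    · intro i _ hi
      have hlt := i.isLt
      have h1 : ¬ ((n + i.1 : ℕ) = n + j.1) := by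
        intro hc; exact hi (Fin.ext (by simp only [Fin.val_mk]; omega))
      have h2 : ¬ ((i.1 : ℕ) = n + j.1) := by omega
      have h3 : ¬ ((i.1 : ℕ) = j.1) := by omega
      simp [Pi.single_apply, Fin.ext_iff, h1, h2, h3]
    · simp
  · have hj' : j.1 - n < n := by have := j.isLt; omega
    have := h (Pi.single ⟨j.1 - n, by omega⟩ 1)
    rw [OmegaR, Finset.sum_eq_single ⟨j.1 - n, hj'⟩] at this
    · have hne : ¬ ((n + (j.1 - n) : ℕ) = j.1 - n) := by omega
      have hJ : (⟨n + (j.1 - n), by omega⟩ : Fin (2*n)) = j := Fin.ext (by simp; omega)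
      rw [hJ] at this
      have hjlt := j.isLt
      have hne2 : ¬ ((j.1:ℕ) = j.1 - n) := by omega
      simpa [Pi.single_apply, Fin.ext_iff, hne, hne2] using this
    · intro i _ hi
      have hlt := i.isLt
      have h1 : ¬ ((i.1 : ℕ) = j.1 - n) := by
        intro hc; exact hi (Fin.ext (by simp only [Fin.val_mk]; omega))
      have h2 : ¬ ((n + i.1 : ℕ) = j.1 - n) := by omega
      simp [Pi.single_apply, Fin.ext_iff, h1, h2]
    · simp


/-- Over `R = ℝ⟦t⟧`: for `R`-linear `A : M → End_R(M)` with
`Ω_R(A(X)Y,Z)` totally symmetric and `A(X)∘A(Y) = 0`, the map `ψ_A(x) = x − ½A(x)x`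
is a bijection with inverse `ψ_{−A}`, its 'derivatives' `id − A(x)` are symplectic, and
`ψ_A` carries `∇⁰` to `∇^A = ∇⁰ + A`. -/
theorem psiR_formal_symplectomorphism (n : ℕ) (hn : 1 ≤ n)
    (A : (Fin (2*n) → PowerSeries ℝ) →ₗ[PowerSeries ℝ]
      (Fin (2*n) → PowerSeries ℝ) →ₗ[PowerSeries ℝ] (Fin (2*n) → PowerSeries ℝ))
    (hsym₁ : ∀ X Y Z, OmegaR n (A X Y) Z = OmegaR n (A Y X) Z)
    (hsym₂ : ∀ X Y Z, OmegaR n (A X Y) Z = OmegaR n (A X Z) Y)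
    (hnil : ∀ X Y Z, A X (A Y Z) = 0) :
    (∀ x, psiR n (-A) (psiR n A x) = x) ∧
    (∀ x, psiR n A (psiR n (-A) x) = x) ∧
    (∀ x Y Z, OmegaR n (Y - A x Y) (Z - A x Z) = OmegaR n Y Z) ∧
    (∀ x X Y, -(A X Y) + A (X - A x X) (Y - A x Y) = 0) := by
  have hAs : ∀ X Y, A X Y = A Y X := by
    intro X Y
    have h0 : ∀ Z, OmegaR n (A X Y - A Y X) Z = 0 := fun Z => by
      rw [OmegaR_sub_left, hsym₁ X Y Z, sub_self]
    exact sub_eq_zero.mp (OmegaR_nondeg n _ h0)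
  have key : ∀ (B : (Fin (2*n) → PowerSeries ℝ) →ₗ[PowerSeries ℝ]
      (Fin (2*n) → PowerSeries ℝ) →ₗ[PowerSeries ℝ] (Fin (2*n) → PowerSeries ℝ)),
      (∀ X Y, B X Y = B Y X) → (∀ X Y Z, B X (B Y Z) = 0) →
      ∀ x, psiR n (-B) (psiR n B x) = x := by
    intro B hs h0 x
    have h1 : B x (B x x) = 0 := h0 _ _ _
    have h2 : B (B x x) x = 0 := by rw [hs]; exact h0 _ _ _
    have h3 : B (B x x) (B x x) = 0 := h0 _ _ _
    have hy : B (x - (1/2 : ℝ) • B x x) (x - (1/2 : ℝ) • B x x) = B x x := by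
      simp [map_sub, LinearMap.map_smul_of_tower, LinearMap.sub_apply,
        LinearMap.smul_apply, h1, h2, h3]
    simp only [psiR, LinearMap.neg_apply, hy]
    module
  refine ⟨key A hAs hnil, ?_, ?_, ?_⟩
  · have hAs' : ∀ X Y, (-A) X Y = (-A) Y X := fun X Y => by
      simp [hAs X Y]
    have hnil' : ∀ X Y Z, (-A) X ((-A) Y Z) = 0 := fun X Y Z => by
      simp [hnil]
    have := key (-A) hAs' hnil'
    have hAA : - -A = A := neg_neg A
    rw [hAA] at this; exact this
  · intro x Y Z
    have e1 : OmegaR n (A x Y) (A x Z) = 0 := by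
      rw [hsym₂ x Y (A x Z), hnil, OmegaR_zero_left]
    have e2 : OmegaR n Y (A x Z) = -OmegaR n (A x Y) Z := by
      rw [OmegaR_skew n Y (A x Z), hsym₂ x Z Y]
    rw [OmegaR_sub_left, OmegaR_sub_right, OmegaR_sub_right, e1, e2]
    ring
  · intro x X Y
    have h1 : A X (A x Y) = 0 := hnil _ _ _
    have h2 : A (A x X) Y = 0 := by rw [hAs]; exact hnil _ _ _
    have h3 : A (A x X) (A x Y) = 0 := by rw [hAs]; exact hnil _ _ _
    simp [map_sub, LinearMap.sub_apply, h1, h2, h3]
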